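/- A globally defined continuous motion planning algorithm exists on a path-connected space X if and only if X is contractible; i.e., the evaluation map ev : C([0,1], X) → X × X, ev(α) = (α(0), α(1)), admits a continuous section if and only if X is contractible. -/

import Mathlib

/-- Farber's theorem: a globally defined continuous motion planning algorithm exists on a
path-connected space `X` if and only if `X` is contractible. -/
theorem global_motion_planner_iff_contractible (X : Type*) [TopologicalSpace X]
    [PathConnectedSpace X] :
    (∃ s : X × X → C(unitInterval, X),
        Continuous s ∧ ∀ p : X × X, s p 0 = p.1 ∧ s p 1 = p.2) ↔
      ContractibleSpace X := by
  constructor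
  · rintro ⟨s, hs, hep⟩
    obtain ⟨x0⟩ : Nonempty X := inferInstance
    rw [contractible_iff_id_nullhomotopic]
    refine ⟨x0, ⟨⟨⟨fun q => s (q.2, x0) q.1, ?_⟩, ?_, ?_⟩⟩⟩
    · exact continuous_eval.comp
        ((hs.comp (continuous_snd.prodMk continuous_const)).prodMk continuous_fst)
    · intro x; exact (hep (x, x0)).1
    · intro x; exact (hep (x, x0)).2
  · intro h
    obtain ⟨y, ⟨H⟩⟩ := id_nullhomotopic X
    set pr : ℝ → unitInterval := Set.projIcc 0 1 zero_le_one with hpr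
    set g : (X × X) × ℝ → X := fun q =>
      if q.2 ≤ 1/2 then H (pr (2*q.2), q.1.1) else H (pr (2 - 2*q.2), q.1.2) with hg
    have hgc : Continuous g := by
      apply Continuous.if_le
      · exact H.continuous.comp (((continuous_projIcc).comp
          (continuous_const.mul continuous_snd)).prodMk (continuous_fst.fst))
      · exact H.continuous.comp (((continuous_projIcc).comp
          (continuous_const.sub (continuous_const.mul continuous_snd))).prodMk
          (continuous_fst.snd))
      · exact continuous_snd
      · exact continuous_const
      · intro q hq
        have pr1 : pr 1 = 1 := by simp [hpr]
        simp only [hq]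
        norm_num
        rw [pr1, H.apply_one, H.apply_one]; rfl
    set Fc : C((X × X) × unitInterval, X) :=
      ⟨fun q => g (q.1, (q.2 : ℝ)),
        hgc.comp (continuous_fst.prodMk (continuous_subtype_val.comp continuous_snd))⟩ with hFc
    refine ⟨fun p => Fc.curry p, Fc.curry.continuous, fun p => ⟨?_, ?_⟩⟩
    · show g (p, ((0 : unitInterval) : ℝ)) = p.1
      have : ((0 : unitInterval) : ℝ) = 0 := rfl
      simp only [hg, this]
      norm_num
      have : pr 0 = 0 := by simp [hpr]
      rw [this]
      exact H.apply_zero p.1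
    · show g (p, ((1 : unitInterval) : ℝ)) = p.2
      have : ((1 : unitInterval) : ℝ) = 1 := rfl
      simp only [hg, this]
      norm_num
      have : pr 0 = 0 := by simp [hpr]
      rw [this]
      exact H.apply_zero p.2
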